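/- Let ξ : Ω → ℝ^N be a C¹ map on an open connected set Ω ⊆ ℝ^N such that for every x ∈ Ω the derivative ξ'(x) is an orthogonal matrix. Then ξ is locally a rigid motion; in fact ξ is the restriction of a map x ↦ Ax + b with A a fixed orthogonal matrix and b ∈ ℝ^N. -/

import Mathlib

open scoped RealInnerProductSpace
open Metric

variable {N : ℕ}

lemma stmt11_norm_fderiv {Ω : Set (EuclideanSpace ℝ (Fin N))}
    {ξ : EuclideanSpace ℝ (Fin N) → EuclideanSpace ℝ (Fin N)}
    (horth : ∀ x ∈ Ω, ∀ v w : EuclideanSpace ℝ (Fin N),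
      ⟪fderiv ℝ ξ x v, fderiv ℝ ξ x w⟫ = ⟪v, w⟫)
    {x : EuclideanSpace ℝ (Fin N)} (hx : x ∈ Ω) (v : EuclideanSpace ℝ (Fin N)) :
    ‖fderiv ℝ ξ x v‖ = ‖v‖ := by
  have h := horth x hx v v
  rw [real_inner_self_eq_norm_sq, real_inner_self_eq_norm_sq] at h
  nlinarith [norm_nonneg (fderiv ℝ ξ x v), norm_nonneg v]

lemma stmt11_surj {Ω : Set (EuclideanSpace ℝ (Fin N))}
    {ξ : EuclideanSpace ℝ (Fin N) → EuclideanSpace ℝ (Fin N)}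
    (horth : ∀ x ∈ Ω, ∀ v w : EuclideanSpace ℝ (Fin N),
      ⟪fderiv ℝ ξ x v, fderiv ℝ ξ x w⟫ = ⟪v, w⟫)
    {x : EuclideanSpace ℝ (Fin N)} (hx : x ∈ Ω) :
    Function.Bijective (fderiv ℝ ξ x) := by
  have hinj : Function.Injective (fderiv ℝ ξ x) := by
    intro v w h
    have := stmt11_norm_fderiv horth hx (v - w)
    rw [map_sub, h, sub_self, norm_zero] at this
    exact sub_eq_zero.mp (norm_eq_zero.mp this.symm)
  exact ⟨hinj, (LinearMap.injective_iff_surjective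
    (f := (fderiv ℝ ξ x : _ →L[ℝ] _).toLinearMap)).mp hinj⟩


noncomputable def stmt11_equiv
    (D : EuclideanSpace ℝ (Fin N) →L[ℝ] EuclideanSpace ℝ (Fin N))
    (h : Function.Bijective D) :
    EuclideanSpace ℝ (Fin N) ≃L[ℝ] EuclideanSpace ℝ (Fin N) :=
  (LinearEquiv.ofBijective D.toLinearMap h).toContinuousLinearEquiv

lemma stmt11_equiv_coe
    (D : EuclideanSpace ℝ (Fin N) →L[ℝ] EuclideanSpace ℝ (Fin N))
    (h : Function.Bijective D) :
    (stmt11_equiv D h : EuclideanSpace ℝ (Fin N) →L[ℝ] EuclideanSpace ℝ (Fin N)) = D := by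
  ext v
  simp [stmt11_equiv]

/-- A local `C¹` inverse of `ξ` around `c` that is `1`-Lipschitz near `ξ c`. -/
lemma stmt11_inverse {Ω : Set (EuclideanSpace ℝ (Fin N))}
    (hΩopen : IsOpen Ω)
    {ξ : EuclideanSpace ℝ (Fin N) → EuclideanSpace ℝ (Fin N)}
    (hξ : ContDiffOn ℝ 1 ξ Ω)
    (horth : ∀ x ∈ Ω, ∀ v w : EuclideanSpace ℝ (Fin N),
      ⟪fderiv ℝ ξ x v, fderiv ℝ ξ x w⟫ = ⟪v, w⟫)
    {c : EuclideanSpace ℝ (Fin N)} (hc : c ∈ Ω) :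
    ∃ σ > 0, ∃ g : EuclideanSpace ℝ (Fin N) → EuclideanSpace ℝ (Fin N),
      (∀ᶠ x in nhds c, g (ξ x) = x) ∧
      ∀ y ∈ ball (ξ c) σ, ∀ z ∈ ball (ξ c) σ, ‖g y - g z‖ ≤ ‖y - z‖ := by
  classical
  have hdiff : ∀ x ∈ Ω, DifferentiableAt ℝ ξ x := fun x hx =>
    (hξ.contDiffAt (hΩopen.mem_nhds hx)).differentiableAt one_ne_zero
  have hca : ContDiffAt ℝ 1 ξ c := hξ.contDiffAt (hΩopen.mem_nhds hc)
  obtain ⟨g, hg, hgc, hleft, hright⟩ :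
      ∃ g : EuclideanSpace ℝ (Fin N) → EuclideanSpace ℝ (Fin N),
        ContDiffAt ℝ 1 g (ξ c) ∧ g (ξ c) = c ∧ (∀ᶠ x in nhds c, g (ξ x) = x) ∧
        (∀ᶠ y in nhds (ξ c), ξ (g y) = y) := by
    have hF' : HasFDerivAt ξ
        ((stmt11_equiv (fderiv ℝ ξ c) (stmt11_surj horth hc) :
          EuclideanSpace ℝ (Fin N) ≃L[ℝ] EuclideanSpace ℝ (Fin N)) :
          EuclideanSpace ℝ (Fin N) →L[ℝ] EuclideanSpace ℝ (Fin N)) c := by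
      rw [stmt11_equiv_coe]
      exact (hdiff c hc).hasFDerivAt
    have hstrict := hca.hasStrictFDerivAt' hF' one_ne_zero
    exact ⟨hca.localInverse hF' one_ne_zero, hca.to_localInverse hF' one_ne_zero,
      hca.localInverse_apply_image hF' one_ne_zero,
      hstrict.eventually_left_inverse, hstrict.eventually_right_inverse⟩
  obtain ⟨u, hu_nhds, hgu⟩ := hg.contDiffOn le_rfl (by simp)
  set W₀ : Set (EuclideanSpace ℝ (Fin N)) := interior (u ∩ {y | ξ (g y) = y}) with hW₀def
  have hW₀open : IsOpen W₀ := isOpen_interior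
  have hW₀mem : ξ c ∈ W₀ := mem_interior_iff_mem_nhds.mpr (Filter.inter_mem hu_nhds hright)
  have hgW₀ : ContDiffOn ℝ 1 g W₀ := hgu.mono (interior_subset.trans Set.inter_subset_left)
  have hgdiffW₀ : ∀ y ∈ W₀, DifferentiableAt ℝ g y := fun y hy =>
    ((hgW₀.differentiableOn one_ne_zero) y hy).differentiableAt (hW₀open.mem_nhds hy)
  set W : Set (EuclideanSpace ℝ (Fin N)) := W₀ ∩ g ⁻¹' Ω with hWdef
  have hWopen : IsOpen W := (hgW₀.continuousOn.isOpen_inter_preimage hW₀open hΩopen)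
  have hWmem : ξ c ∈ W := ⟨hW₀mem, by simp [hgc, hc]⟩
  have hgnorm : ∀ y ∈ W, ‖fderiv ℝ g y‖ ≤ 1 := by
    intro y hy
    have hyW₀ : y ∈ W₀ := hy.1
    have hgyΩ : g y ∈ Ω := hy.2
    have hcomp : HasFDerivAt (ξ ∘ g) ((fderiv ℝ ξ (g y)).comp (fderiv ℝ g y)) y :=
      (hdiff _ hgyΩ).hasFDerivAt.comp y (hgdiffW₀ y hyW₀).hasFDerivAt
    have hid : HasFDerivAt (fun z : EuclideanSpace ℝ (Fin N) => z)
        ((fderiv ℝ ξ (g y)).comp (fderiv ℝ g y)) y := by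
      apply hcomp.congr_of_eventuallyEq
      filter_upwards [hW₀open.mem_nhds hyW₀] with z hz
      exact (interior_subset hz).2.symm
    have huniq : (fderiv ℝ ξ (g y)).comp (fderiv ℝ g y) =
        ContinuousLinearMap.id ℝ (EuclideanSpace ℝ (Fin N)) :=
      hid.unique (hasFDerivAt_id y)
    refine ContinuousLinearMap.opNorm_le_bound _ zero_le_one (fun w => ?_)
    have h1 : ‖fderiv ℝ ξ (g y) (fderiv ℝ g y w)‖ = ‖fderiv ℝ g y w‖ :=
      stmt11_norm_fderiv horth hgyΩ _
    have h2 : fderiv ℝ ξ (g y) (fderiv ℝ g y w) = w := by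
      have := congrArg (fun T : _ →L[ℝ] _ => T w) huniq
      simpa using this
    rw [one_mul, ← h1, h2]
  obtain ⟨σ, hσpos, hσball⟩ := Metric.isOpen_iff.mp hWopen (ξ c) hWmem
  refine ⟨σ, hσpos, g, hleft, ?_⟩
  intro y hy z hz
  have := (convex_ball (ξ c) σ).norm_image_sub_le_of_norm_fderiv_le
    (fun w hw => hgdiffW₀ w (hσball hw).1)
    (fun w hw => hgnorm w (hσball hw)) hz hy
  simpa using this

/-- Local isometry: around any point of `Ω` there is a ball on which `ξ` preserves distances. -/
lemma stmt11_loc_isom {Ω : Set (EuclideanSpace ℝ (Fin N))}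
    (hΩopen : IsOpen Ω)
    {ξ : EuclideanSpace ℝ (Fin N) → EuclideanSpace ℝ (Fin N)}
    (hξ : ContDiffOn ℝ 1 ξ Ω)
    (horth : ∀ x ∈ Ω, ∀ v w : EuclideanSpace ℝ (Fin N),
      ⟪fderiv ℝ ξ x v, fderiv ℝ ξ x w⟫ = ⟪v, w⟫)
    {c : EuclideanSpace ℝ (Fin N)} (hc : c ∈ Ω) :
    ∃ ρ > 0, ball c ρ ⊆ Ω ∧
      ∀ x ∈ ball c ρ, ∀ y ∈ ball c ρ, ‖ξ x - ξ y‖ = ‖x - y‖ := by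
  have hdiff : ∀ x ∈ Ω, DifferentiableAt ℝ ξ x := fun x hx =>
    (hξ.contDiffAt (hΩopen.mem_nhds hx)).differentiableAt one_ne_zero
  have hopnorm : ∀ x ∈ Ω, ‖fderiv ℝ ξ x‖ ≤ 1 := fun x hx =>
    ContinuousLinearMap.opNorm_le_bound _ zero_le_one
      (fun v => by rw [stmt11_norm_fderiv horth hx v, one_mul])
  obtain ⟨σ, hσpos, g, hleft, hglip⟩ := stmt11_inverse hΩopen hξ horth hc
  have hcont : ContinuousAt ξ c := (hξ.contDiffAt (hΩopen.mem_nhds hc)).continuousAt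
  have h1 : ∀ᶠ x in nhds c, ξ x ∈ ball (ξ c) σ :=
    hcont.eventually_mem (ball_mem_nhds _ hσpos)
  have h2 : ∀ᶠ x in nhds c, x ∈ Ω := hΩopen.mem_nhds hc
  obtain ⟨ρ, hρpos, hρ⟩ := Metric.eventually_nhds_iff_ball.mp (h1.and (h2.and hleft))
  refine ⟨ρ, hρpos, fun x hx => (hρ x hx).2.1, ?_⟩
  intro x hx y hy
  obtain ⟨hξx, hxΩ, hgx⟩ := hρ x hx
  obtain ⟨hξy, hyΩ, hgy⟩ := hρ y hy
  refine le_antisymm ?_ ?_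
  · have := (convex_ball c ρ).norm_image_sub_le_of_norm_fderiv_le
      (fun w hw => hdiff w (hρ w hw).2.1)
      (fun w hw => hopnorm w (hρ w hw).2.1) hy hx
    simpa using this
  · calc ‖x - y‖ = ‖g (ξ x) - g (ξ y)‖ := by rw [hgx, hgy]
      _ ≤ ‖ξ x - ξ y‖ := hglip _ hξx _ hξy


set_option maxHeartbeats 1000000 in
/-- On a ball where `ξ` preserves distances, `ξ` is affine with linear part `fderiv ℝ ξ c`. -/
lemma stmt11_affine {Ω : Set (EuclideanSpace ℝ (Fin N))}
    (hΩopen : IsOpen Ω)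
    {ξ : EuclideanSpace ℝ (Fin N) → EuclideanSpace ℝ (Fin N)}
    (hξ : ContDiffOn ℝ 1 ξ Ω)
    (horth : ∀ x ∈ Ω, ∀ v w : EuclideanSpace ℝ (Fin N),
      ⟪fderiv ℝ ξ x v, fderiv ℝ ξ x w⟫ = ⟪v, w⟫)
    {c : EuclideanSpace ℝ (Fin N)} (hc : c ∈ Ω)
    {ρ : ℝ} (hρpos : 0 < ρ) (hball : ball c ρ ⊆ Ω)
    (hiso : ∀ x ∈ ball c ρ, ∀ y ∈ ball c ρ, ‖ξ x - ξ y‖ = ‖x - y‖)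
    {x : EuclideanSpace ℝ (Fin N)} (hx : x ∈ ball c ρ) :
    ξ x = fderiv ℝ ξ c (x - c) + ξ c := by
  have hcball : c ∈ ball c ρ := mem_ball_self hρpos
  -- inner products of differences are preserved
  have hinner : ∀ z ∈ ball c ρ, ⟪ξ x - ξ c, ξ z - ξ c⟫ = ⟪x - c, z - c⟫ := by
    intro z hz
    have e1 : ‖ξ x - ξ c‖ = ‖x - c‖ := hiso x hx c hcball
    have e2 : ‖ξ z - ξ c‖ = ‖z - c‖ := hiso z hz c hcball
    have e3 : ‖ξ x - ξ z‖ = ‖x - z‖ := hiso x hx z hz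
    have p1 := norm_sub_sq_real (ξ x - ξ c) (ξ z - ξ c)
    have p2 := norm_sub_sq_real (x - c) (z - c)
    have e4 : (ξ x - ξ c) - (ξ z - ξ c) = ξ x - ξ z := by abel
    have e5 : (x - c) - (z - c) = x - z := by abel
    rw [e4, e1, e2, e3] at p1
    rw [e5] at p2
    nlinarith [p1, p2]
  -- the key limit computation
  have hkey : ∀ w : EuclideanSpace ℝ (Fin N),
      ⟪ξ x - ξ c, fderiv ℝ ξ c w⟫ = ⟪x - c, w⟫ := by
    intro w
    have hder : HasDerivAt (fun t : ℝ => ξ (c + t • w)) (fderiv ℝ ξ c w) 0 := by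
      have h1 : HasFDerivAt ξ (fderiv ℝ ξ c) (c + (0 : ℝ) • w) := by
        have : c + (0 : ℝ) • w = c := by simp
        rw [this]
        exact ((hξ.contDiffAt (hΩopen.mem_nhds hc)).differentiableAt one_ne_zero).hasFDerivAt
      have h2 : HasDerivAt (fun t : ℝ => c + t • w) w 0 := by
        simpa using ((hasDerivAt_id (0 : ℝ)).smul_const w).const_add c
      exact h1.comp_hasDerivAt 0 h2
    have hlim : Filter.Tendsto (fun t : ℝ => t⁻¹ • (ξ (c + t • w) - ξ (c + (0:ℝ) • w)))
        (nhdsWithin 0 {(0:ℝ)}ᶜ) (nhds (fderiv ℝ ξ c w)) := by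
      have := hasDerivAt_iff_tendsto_slope_zero.mp hder
      simpa using this
    have hlim2 : Filter.Tendsto (fun t : ℝ => ⟪ξ x - ξ c, t⁻¹ • (ξ (c + t • w) - ξ (c + (0:ℝ) • w))⟫)
        (nhdsWithin 0 {(0:ℝ)}ᶜ) (nhds ⟪ξ x - ξ c, fderiv ℝ ξ c w⟫) :=
      ((continuous_const.inner continuous_id).continuousAt.tendsto).comp hlim
    have heq : ∀ᶠ t : ℝ in nhdsWithin 0 {(0:ℝ)}ᶜ,
        ⟪ξ x - ξ c, t⁻¹ • (ξ (c + t • w) - ξ (c + (0:ℝ) • w))⟫ = ⟪x - c, w⟫ := by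
      have hmem : ∀ᶠ t : ℝ in nhds 0, c + t • w ∈ ball c ρ := by
        have hcont : Continuous (fun t : ℝ => c + t • w) := by continuity
        have : (fun t : ℝ => c + t • w) 0 = c := by simp
        have := hcont.continuousAt (x := (0:ℝ))
        apply this.eventually_mem
        rw [show c + (0:ℝ) • w = c by simp]
        exact ball_mem_nhds _ hρpos
      filter_upwards [nhdsWithin_le_nhds hmem, self_mem_nhdsWithin] with t hmemt ht
      have ht0 : t ≠ 0 := ht
      rw [real_inner_smul_right]
      rw [show c + (0:ℝ) • w = c by simp]
      rw [hinner _ hmemt]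
      have : (c + t • w) - c = t • w := by abel
      rw [this, real_inner_smul_right, inv_mul_cancel_left₀ ht0]
    have := tendsto_nhds_unique (hlim2.congr' heq) tendsto_const_nhds
    linarith [this]
  -- conclude by surjectivity
  have hsur := (stmt11_surj horth hc).2
  have hzero : ξ x - ξ c - fderiv ℝ ξ c (x - c) = 0 := by
    have horthog : ∀ u : EuclideanSpace ℝ (Fin N),
        ⟪ξ x - ξ c - fderiv ℝ ξ c (x - c), u⟫ = 0 := by
      intro u
      obtain ⟨w, hw⟩ := hsur u
      rw [← hw, inner_sub_left, hkey w, horth c hc (x - c) w, sub_self]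
    exact inner_self_eq_zero.mp (horthog (ξ x - ξ c - fderiv ℝ ξ c (x - c)))
  have : ξ x - ξ c = fderiv ℝ ξ c (x - c) := by
    have := sub_eq_zero.mp hzero
    exact this
  rw [← this]; abel


/-- The pair (derivative, translation part) is locally constant on `Ω`. -/
lemma stmt11_locconst {Ω : Set (EuclideanSpace ℝ (Fin N))}
    (hΩopen : IsOpen Ω)
    {ξ : EuclideanSpace ℝ (Fin N) → EuclideanSpace ℝ (Fin N)}
    (hξ : ContDiffOn ℝ 1 ξ Ω)
    (horth : ∀ x ∈ Ω, ∀ v w : EuclideanSpace ℝ (Fin N),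
      ⟪fderiv ℝ ξ x v, fderiv ℝ ξ x w⟫ = ⟪v, w⟫)
    {c : EuclideanSpace ℝ (Fin N)} (hc : c ∈ Ω) :
    ∃ ρ > 0, ball c ρ ⊆ Ω ∧ ∀ x ∈ ball c ρ,
      fderiv ℝ ξ x = fderiv ℝ ξ c ∧ ξ x - fderiv ℝ ξ x x = ξ c - fderiv ℝ ξ c c := by
  obtain ⟨ρ, hρpos, hball, hiso⟩ := stmt11_loc_isom hΩopen hξ horth hc
  have haff : ∀ x ∈ ball c ρ, ξ x = fderiv ℝ ξ c (x - c) + ξ c := fun x hx =>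
    stmt11_affine hΩopen hξ horth hc hρpos hball hiso hx
  refine ⟨ρ, hρpos, hball, fun x hx => ?_⟩
  have hfd : fderiv ℝ ξ x = fderiv ℝ ξ c := by
    have hev : ξ =ᶠ[nhds x] (fun y => fderiv ℝ ξ c (y - c) + ξ c) := by
      filter_upwards [isOpen_ball.mem_nhds hx] with y hy
      exact haff y hy
    have h2 : HasFDerivAt (fun y => fderiv ℝ ξ c (y - c) + ξ c) (fderiv ℝ ξ c) x := by
      have h3 : HasFDerivAt (fun y : EuclideanSpace ℝ (Fin N) =>
          fderiv ℝ ξ c y - fderiv ℝ ξ c c + ξ c) (fderiv ℝ ξ c) x :=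
        (((fderiv ℝ ξ c).hasFDerivAt).sub_const _).add_const _
      have h4 : (fun y : EuclideanSpace ℝ (Fin N) => fderiv ℝ ξ c (y - c) + ξ c)
          = fun y => fderiv ℝ ξ c y - fderiv ℝ ξ c c + ξ c := by
        funext y; rw [map_sub]
      rw [h4]; exact h3
    rw [hev.fderiv_eq]
    exact h2.fderiv
  refine ⟨hfd, ?_⟩
  rw [hfd, haff x hx, map_sub]
  abel

/-- Liouville-type rigidity: if `ξ : Ω → ℝ^N` is `C¹` on an open connected set
`Ω ⊆ ℝ^N` and `ξ'(x)` is an orthogonal matrix for every `x ∈ Ω`, then `ξ` is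
(the restriction of) a rigid motion `x ↦ A x + b` with `A` a fixed linear
isometry and `b ∈ ℝ^N`. -/
theorem stmt11 {N : ℕ} (Ω : Set (EuclideanSpace ℝ (Fin N)))
    (hΩopen : IsOpen Ω) (hΩconn : IsConnected Ω)
    (ξ : EuclideanSpace ℝ (Fin N) → EuclideanSpace ℝ (Fin N))
    (hξ : ContDiffOn ℝ 1 ξ Ω)
    (horth : ∀ x ∈ Ω, ∀ v w : EuclideanSpace ℝ (Fin N),
      ⟪fderiv ℝ ξ x v, fderiv ℝ ξ x w⟫ = ⟪v, w⟫) :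
    ∃ (A : EuclideanSpace ℝ (Fin N) →ₗᵢ[ℝ] EuclideanSpace ℝ (Fin N))
      (b : EuclideanSpace ℝ (Fin N)), ∀ x ∈ Ω, ξ x = A x + b := by
  classical
  obtain ⟨c₀, hc₀⟩ := hΩconn.nonempty
  -- the invariant pair
  set G : EuclideanSpace ℝ (Fin N) →
      (EuclideanSpace ℝ (Fin N) →L[ℝ] EuclideanSpace ℝ (Fin N)) × EuclideanSpace ℝ (Fin N) :=
    fun x => (fderiv ℝ ξ x, ξ x - fderiv ℝ ξ x x) with hGdef
  have hloc : ∀ c ∈ Ω, ∃ ρ > 0, ball c ρ ⊆ Ω ∧ ∀ x ∈ ball c ρ, G x = G c := by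
    intro c hc
    obtain ⟨ρ, hρpos, hball, h⟩ := stmt11_locconst hΩopen hξ horth hc
    exact ⟨ρ, hρpos, hball, fun x hx => Prod.ext (h x hx).1 (h x hx).2⟩
  -- constancy of G on Ω via connectedness
  have hconst : ∀ x ∈ Ω, G x = G c₀ := by
    have hUopen : IsOpen {x | ∃ ρ > 0, ball x ρ ⊆ {y | y ∈ Ω ∧ G y = G c₀}} := by
      rw [Metric.isOpen_iff]
      rintro x ⟨ρ, hρpos, hβ⟩
      exact ⟨ρ, hρpos, fun y hy => by
        obtain ⟨ρ', hρ'pos, hβ'⟩ : ∃ ρ' > 0, ball y ρ' ⊆ ball x ρ := by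
          refine ⟨ρ - dist y x, by simp [mem_ball] at hy; linarith, ?_⟩
          exact ball_subset_ball' (by linarith [le_of_eq (rfl : dist y x = dist y x)])
        exact ⟨ρ', hρ'pos, hβ'.trans hβ⟩⟩
    have hVopen : IsOpen {x | ∃ ρ > 0, ball x ρ ⊆ {y | y ∈ Ω ∧ G y ≠ G c₀}} := by
      rw [Metric.isOpen_iff]
      rintro x ⟨ρ, hρpos, hβ⟩
      exact ⟨ρ, hρpos, fun y hy => by
        obtain ⟨ρ', hρ'pos, hβ'⟩ : ∃ ρ' > 0, ball y ρ' ⊆ ball x ρ := by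
          refine ⟨ρ - dist y x, by simp [mem_ball] at hy; linarith, ?_⟩
          exact ball_subset_ball' (by linarith [le_of_eq (rfl : dist y x = dist y x)])
        exact ⟨ρ', hρ'pos, hβ'.trans hβ⟩⟩
    -- every point of Ω is in one of the two sets
    have hcover : ∀ x ∈ Ω, (∃ ρ > 0, ball x ρ ⊆ {y | y ∈ Ω ∧ G y = G c₀}) ∨
        (∃ ρ > 0, ball x ρ ⊆ {y | y ∈ Ω ∧ G y ≠ G c₀}) := by
      intro x hx
      obtain ⟨ρ, hρpos, hball, hGconst⟩ := hloc x hx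
      by_cases hG : G x = G c₀
      · exact Or.inl ⟨ρ, hρpos, fun y hy => ⟨hball hy, (hGconst y hy).trans hG⟩⟩
      · exact Or.inr ⟨ρ, hρpos, fun y hy => ⟨hball hy, fun h => hG (((hGconst y hy).symm.trans h))⟩⟩
    by_contra hcon
    push_neg at hcon
    obtain ⟨z, hzΩ, hzG⟩ := hcon
    have := hΩconn.isPreconnected
    rw [IsPreconnected] at this
    have hsub : Ω ⊆ {x | ∃ ρ > 0, ball x ρ ⊆ {y | y ∈ Ω ∧ G y = G c₀}} ∪
        {x | ∃ ρ > 0, ball x ρ ⊆ {y | y ∈ Ω ∧ G y ≠ G c₀}} := fun x hx => hcover x hx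
    have hU : (Ω ∩ {x | ∃ ρ > 0, ball x ρ ⊆ {y | y ∈ Ω ∧ G y = G c₀}}).Nonempty := by
      refine ⟨c₀, hc₀, ?_⟩
      rcases hcover c₀ hc₀ with h | h
      · exact h
      · obtain ⟨ρ, hρ, hβ⟩ := h
        exact absurd rfl (hβ (mem_ball_self hρ)).2
    have hV : (Ω ∩ {x | ∃ ρ > 0, ball x ρ ⊆ {y | y ∈ Ω ∧ G y ≠ G c₀}}).Nonempty := by
      refine ⟨z, hzΩ, ?_⟩
      rcases hcover z hzΩ with h | h
      · obtain ⟨ρ, hρ, hβ⟩ := h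
        exact absurd (hβ (mem_ball_self hρ)).2 hzG
      · exact h
    obtain ⟨w, hwΩ, hw1, hw2⟩ := this _ _ hUopen hVopen hsub hU hV
    obtain ⟨ρ1, hρ1, hβ1⟩ := hw1
    obtain ⟨ρ2, hρ2, hβ2⟩ := hw2
    exact (hβ2 (mem_ball_self hρ2)).2 (hβ1 (mem_ball_self hρ1)).2
  -- assemble the rigid motion
  refine ⟨⟨(fderiv ℝ ξ c₀ : EuclideanSpace ℝ (Fin N) →ₗ[ℝ] EuclideanSpace ℝ (Fin N)),
      fun v => stmt11_norm_fderiv horth hc₀ v⟩,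
    ξ c₀ - fderiv ℝ ξ c₀ c₀, ?_⟩
  intro x hx
  have h := hconst x hx
  have h1 : fderiv ℝ ξ x = fderiv ℝ ξ c₀ := congrArg Prod.fst h
  have h2 : ξ x - fderiv ℝ ξ x x = ξ c₀ - fderiv ℝ ξ c₀ c₀ := congrArg Prod.snd h
  rw [h1] at h2
  simp only [LinearIsometry.coe_mk, ContinuousLinearMap.coe_coe]
  have : ξ x = fderiv ℝ ξ c₀ x + (ξ c₀ - fderiv ℝ ξ c₀ c₀) := by
    rw [← h2]; abel
  exact this
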